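/- Let μ₁ and μ₂ be nonnegative Borel measures on ℝⁿ, each positive and finite on every cube. Suppose (μ₁,μ₂) ∈ C(δ) for some δ > 0 and that at least one of μ₁, μ₂ is doubling. Then both μ₁ and μ₂ are doubling. -/

import Mathlib

open MeasureTheory ENNReal Set Bornology Pointwise

noncomputable section

abbrev Euc (n : ℕ) := EuclideanSpace ℝ (Fin n)

/-- The Fourier transform `f̂(z) = ∫ f(x) e^{-i x·z} dx`. -/
def ftrans {n : ℕ} (f : Euc n → ℂ) (z : Euc n) : ℂ :=
  ∫ x : Euc n, f x * Complex.exp (-(Complex.I * ((inner ℝ x z : ℝ) : ℂ)))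

/-- A weight: nonnegative, measurable, locally integrable. -/
def IsWeight {n : ℕ} (u : Euc n → ℝ) : Prop :=
  Measurable u ∧ (∀ x, 0 ≤ u x) ∧ LocallyIntegrable u volume

/-- `u(A) = ∫_A u`, as a value in `ℝ≥0∞`. -/
def wMeas {n : ℕ} (u : Euc n → ℝ) (A : Set (Euc n)) : ℝ≥0∞ :=
  ∫⁻ x in A, ENNReal.ofReal (u x)

/-- The polarSet of a set: `E° = {z : |x·z| ≤ 1 for all x ∈ E}`. -/
def polarSet {n : ℕ} (E : Set (Euc n)) : Set (Euc n) :=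
  {z | ∀ x ∈ E, |(inner ℝ x z : ℝ)| ≤ 1}

/-- The setTranslate `E + τ` of a set. -/
def setTranslate {n : ℕ} (τ : Euc n) (E : Set (Euc n)) : Set (Euc n) :=
  (fun x => x + τ) '' E

/-- Conjugate exponent `p' = p/(p-1)`. -/
def rconj (p : ℝ) : ℝ := p / (p - 1)

/-- The weight `w = v^{-p'/p}`. -/
def wFun {n : ℕ} (p : ℝ) (v : Euc n → ℝ) : Euc n → ℝ :=
  fun x => v x ^ (-(rconj p) / p)

/-- The weighted Fourier inequality class `Fourier(p,q)`. -/
def FourierPQ {n : ℕ} (p q : ℝ) (u v : Euc n → ℝ) : Prop :=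
  ∃ C : ℝ, 0 < C ∧ ∀ f : Euc n → ℂ, Integrable f →
    (∫⁻ z, (‖ftrans f z‖₊ : ℝ≥0∞) ^ q * ENNReal.ofReal (u z)) ^ (1/q) ≤
      ENNReal.ofReal C * (∫⁻ x, (‖f x‖₊ : ℝ≥0∞) ^ p * ENNReal.ofReal (v x)) ^ (1/p)

/-- Axis-parallel cube with center `c` and half-side `r`. -/
def axisCube {n : ℕ} (c : Euc n) (r : ℝ) : Set (Euc n) :=
  {x | ∀ i, |x i - c i| ≤ r}

/-- An axis-parallel cube. -/
def IsCube {n : ℕ} (Q : Set (Euc n)) : Prop :=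
  ∃ (c : Euc n) (r : ℝ), 0 < r ∧ Q = axisCube c r

/-- Comparability of measures: `(μ₁,μ₂) ∈ C(δ)`. -/
def Compar {n : ℕ} (μ₁ μ₂ : Measure (Euc n)) (δ : ℝ) : Prop :=
  ∃ C : ℝ, 0 < C ∧ ∀ Q : Set (Euc n), IsCube Q → ∀ E ⊆ Q, MeasurableSet E →
    μ₁ E * μ₂ Q ^ δ ≤ ENNReal.ofReal C * (μ₁ Q * μ₂ E ^ δ)

/-- A doubling measure. -/
def Doubling {n : ℕ} (μ : Measure (Euc n)) : Prop :=
  ∃ C : ℝ, 0 < C ∧ ∀ (c : Euc n) (r : ℝ), 0 < r →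
    μ (axisCube c (2 * r)) ≤ ENNReal.ofReal C * μ (axisCube c r)

/-- `(u, |·|) ∈ C(δ)`. -/
def ComparWL {n : ℕ} (u : Euc n → ℝ) (δ : ℝ) : Prop :=
  ∃ C : ℝ, 0 < C ∧ ∀ Q : Set (Euc n), IsCube Q → ∀ E ⊆ Q, MeasurableSet E →
    wMeas u E * volume Q ^ δ ≤ ENNReal.ofReal C * (wMeas u Q * volume E ^ δ)

/-- `(|·|, v) ∈ C(δ)`. -/
def ComparLW {n : ℕ} (v : Euc n → ℝ) (δ : ℝ) : Prop :=
  ∃ C : ℝ, 0 < C ∧ ∀ Q : Set (Euc n), IsCube Q → ∀ E ⊆ Q, MeasurableSet E →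
    volume E * wMeas v Q ^ δ ≤ ENNReal.ofReal C * (volume Q * wMeas v E ^ δ)

/-- The class `N_Q(p,q)`. -/
def NQ {n : ℕ} (p q : ℝ) (u v : Euc n → ℝ) : Prop :=
  ∃ C : ℝ, 0 < C ∧ ∀ Q : Set (Euc n), IsCube Q → ∀ μ : Euc n, -μ ∈ Q → ∀ τ : Euc n,
    wMeas u Q ^ (1/q) * wMeas (wFun p v) (setTranslate τ (polarSet (setTranslate μ Q))) ^ (1 / rconj p)
        ≤ ENNReal.ofReal C ∧
    wMeas u (setTranslate τ (polarSet (setTranslate μ Q))) ^ (1/q) * wMeas (wFun p v) Q ^ (1 / rconj p)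
        ≤ ENNReal.ofReal C

/-- The class `N_{Q'}(p,q)`. -/
def NQ' {n : ℕ} (p q : ℝ) (u v : Euc n → ℝ) : Prop :=
  ∃ C : ℝ, 0 < C ∧ ∀ Q : Set (Euc n), IsCube Q → ∀ μ : Euc n, -μ ∈ Q → ∀ τ : Euc n,
    wMeas u Q ^ (1/q) * volume (polarSet Q)
        ≤ ENNReal.ofReal C * wMeas v (setTranslate τ (polarSet (setTranslate μ Q))) ^ (1/p) ∧
    wMeas u (setTranslate τ (polarSet (setTranslate μ Q))) ^ (1/q) * volume Q
        ≤ ENNReal.ofReal C * wMeas v Q ^ (1/p)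

/-- A rectanguloid centered at the origin. -/
def IsRectanguloid0 {n : ℕ} (R : Set (Euc n)) : Prop :=
  ∃ (b : OrthonormalBasis (Fin n) ℝ (Euc n)) (a : Fin n → ℝ),
    (∀ i, 0 < a i) ∧ R = {x | ∀ i, |(inner ℝ x (b i) : ℝ)| ≤ a i}

/-- An ellipsoid centered at the origin. -/
def IsEllipsoid0 {n : ℕ} (S : Set (Euc n)) : Prop :=
  ∃ T : Euc n ≃ₗ[ℝ] Euc n, S = ⇑T '' Metric.closedBall 0 1



namespace Aux7
variable {n : ℕ}

lemma measurable_coord (i : Fin n) : Measurable (fun x : Euc n => x i) :=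
  (EuclideanSpace.proj i).continuous.measurable

lemma measurableSet_axisCube (c : Euc n) (r : ℝ) : MeasurableSet (axisCube c r) := by
  have h : axisCube c r = ⋂ i, {x : Euc n | |x i - c i| ≤ r} := by
    ext x; simp [axisCube, Set.mem_iInter]
  rw [h]
  exact MeasurableSet.iInter fun i =>
    measurableSet_le (((measurable_coord i).sub measurable_const).abs) measurable_const

lemma axisCube_mono (c : Euc n) {r R : ℝ} (h : r ≤ R) : axisCube c r ⊆ axisCube c R :=
  fun x hx i => le_trans (hx i) h

lemma axisCube_subset {c c' : Euc n} {r R : ℝ} (h : ∀ i, |c i - c' i| + r ≤ R) :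
    axisCube c r ⊆ axisCube c' R := fun x hx i => by
  have h1 := hx i
  have h2 := abs_sub_le (x i) (c i) (c' i)
  have h3 := h i
  linarith

/-- grid cell -/
def cell (c : Euc n) (w : ℝ) (g : Fin n → ℤ) : Set (Euc n) :=
  {x | ∀ j, c j + g j * w ≤ x j ∧ x j < c j + g j * w + w}

lemma measurableSet_cell (c : Euc n) (w : ℝ) (g : Fin n → ℤ) : MeasurableSet (cell c w g) := by
  have h : cell c w g = ⋂ j, {x : Euc n | c j + g j * w ≤ x j ∧ x j < c j + g j * w + w} := by
    ext x; simp [cell, Set.mem_iInter]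
  rw [h]
  refine MeasurableSet.iInter fun j => MeasurableSet.inter ?_ ?_
  · exact measurableSet_le measurable_const (measurable_coord j)
  · exact measurableSet_lt (measurable_coord j) measurable_const

lemma cell_disjoint (c : Euc n) {w : ℝ} (hw : 0 < w) {g g' : Fin n → ℤ} (h : g ≠ g') :
    Disjoint (cell c w g) (cell c w g') := by
  rw [Set.disjoint_left]
  intro x hx hx'
  obtain ⟨j, hj⟩ := Function.ne_iff.mp h
  rcases lt_or_gt_of_ne hj with hlt | hlt
  · have h1 := (hx j).2
    have h2 := (hx' j).1
    have h3 : ((g j : ℝ) + 1) ≤ (g' j : ℝ) := by exact_mod_cast hlt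
    nlinarith
  · have h1 := (hx' j).2
    have h2 := (hx j).1
    have h3 : ((g' j : ℝ) + 1) ≤ (g j : ℝ) := by exact_mod_cast hlt
    nlinarith

lemma mem_cell_floor (c : Euc n) {w : ℝ} (hw : 0 < w) (x : Euc n) :
    x ∈ cell c w (fun j => ⌊(x j - c j)/w⌋) := by
  intro j
  constructor
  · have h := Int.floor_le ((x j - c j)/w)
    have := (le_div_iff₀ hw).mp h
    linarith
  · have h := Int.lt_floor_add_one ((x j - c j)/w)
    have := (div_lt_iff₀ hw).mp h
    push_cast at this ⊢
    linarith


variable {μ : Measure (Euc n)} {C : ℝ}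

lemma doubling_pow
    (hd : ∀ (c : Euc n) (r : ℝ), 0 < r → μ (axisCube c (2*r)) ≤ ENNReal.ofReal C * μ (axisCube c r))
    (k : ℕ) (c : Euc n) {r : ℝ} (hr : 0 < r) :
    μ (axisCube c (2^k * r)) ≤ ENNReal.ofReal C ^ k * μ (axisCube c r) := by
  induction k with
  | zero => simp
  | succ k ih =>
    have h1 : (2:ℝ)^(k+1) * r = 2 * (2^k * r) := by ring
    rw [h1]
    calc μ (axisCube c (2 * (2^k*r))) ≤ ENNReal.ofReal C * μ (axisCube c (2^k*r)) :=
          hd c _ (by positivity)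
    _ ≤ ENNReal.ofReal C * (ENNReal.ofReal C ^ k * μ (axisCube c r)) := by
          exact mul_le_mul_right ih _
    _ = ENNReal.ofReal C ^ (k+1) * μ (axisCube c r) := by ring

lemma cube_compare
    (hd : ∀ (c : Euc n) (r : ℝ), 0 < r → μ (axisCube c (2*r)) ≤ ENNReal.ofReal C * μ (axisCube c r))
    (k : ℕ) (z : Euc n) {s : ℝ} (hs : 0 < s) {A B : Set (Euc n)}
    (hA : A ⊆ axisCube z (2^k * s)) (hB : axisCube z s ⊆ B) :
    μ A ≤ ENNReal.ofReal C ^ k * μ B := by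
  calc μ A ≤ μ (axisCube z (2^k * s)) := measure_mono hA
  _ ≤ ENNReal.ofReal C ^ k * μ (axisCube z s) := doubling_pow hd k z hs
  _ ≤ ENNReal.ofReal C ^ k * μ B := mul_le_mul_right (measure_mono hB) _

/-- shifted index -/
def shf (i : Fin n) (t : ℤ) (g : Fin n → ℤ) : Fin n → ℤ := fun j => if j = i then g j + t else g j

lemma shf_inj (i : Fin n) (t : ℤ) : Function.Injective (shf i t) := by
  intro g g' h
  funext j
  have := congrFun h j
  by_cases hj : j = i <;> simpa [shf, hj] using this

lemma cell_shift
    (hd : ∀ (c : Euc n) (r : ℝ), 0 < r → μ (axisCube c (2*r)) ≤ ENNReal.ofReal C * μ (axisCube c r))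
    (c : Euc n) {w : ℝ} (hw : 0 < w) (i : Fin n) {t : ℤ} (ht : |t| ≤ 2) (g : Fin n → ℤ) :
    μ (cell c w g) ≤ ENNReal.ofReal C ^ 4 * μ (cell c w (shf i t g)) := by
  set g' := shf i t g with hg'
  have htr : |(t:ℝ)| ≤ 2 := by exact_mod_cast ht
  obtain ⟨ht1, ht2⟩ := abs_le.mp htr
  have htw1 : (-2)*w ≤ (t:ℝ)*w := mul_le_mul_of_nonneg_right ht1 hw.le
  have htw2 : (t:ℝ)*w ≤ 2*w := mul_le_mul_of_nonneg_right ht2 hw.le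
  refine cube_compare hd 4 (WithLp.toLp 2 (fun j => c j + g' j * w + w/4)) (s := w/4) (by positivity) ?_ ?_
  · -- cell g ⊆ axisCube z (2^4 * (w/4))
    intro x hx j
    have hb1 := (hx j).1
    have hb2 := (hx j).2
    have hz : (WithLp.toLp 2 (fun j => c j + (g' j : ℝ) * w + w/4) : Euc n) j = c j + (g' j:ℝ)*w + w/4 := rfl
    rw [hz, abs_le]
    by_cases hj : j = i
    · subst hj
      have hd' : ((g' j : ℝ)) = (g j : ℝ) + (t:ℝ) := by simp [hg', shf]
      rw [hd']
      constructor <;> nlinarith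
    · have hd' : ((g' j : ℝ)) = (g j : ℝ) := by simp [hg', shf, hj]
      rw [hd']
      constructor <;> nlinarith
  · -- axisCube z (w/4) ⊆ cell g'
    intro x hx j
    have hb := hx j
    have hz : (WithLp.toLp 2 (fun j => c j + (g' j : ℝ) * w + w/4) : Euc n) j = c j + (g' j:ℝ)*w + w/4 := rfl
    rw [hz, abs_le] at hb
    exact ⟨by linarith [hb.1], by linarith [hb.2]⟩

/-- slab of thickness w at integer offset p along coordinate i, lateral bound L -/
def slab (c : Euc n) (w : ℝ) (i : Fin n) (p : ℤ) (L : ℝ) : Set (Euc n) :=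
  {x | ((p:ℝ) * w ≤ x i - c i ∧ x i - c i ≤ (p:ℝ) * w + w) ∧ ∀ j, |x j - c j| ≤ L}

/-- target box for shifted cells -/
def sbox (c : Euc n) (w : ℝ) (i : Fin n) (p : ℤ) (q : ℕ) : Set (Euc n) :=
  {x | ((p:ℝ) * w ≤ x i - c i ∧ x i - c i < (p:ℝ) * w + 2*w) ∧
    ∀ j, j ≠ i → (-((q:ℝ) * w) ≤ x j - c j ∧ x j - c j < (q:ℝ)*w + w)}

lemma slab_le
    (hd : ∀ (c : Euc n) (r : ℝ), 0 < r → μ (axisCube c (2*r)) ≤ ENNReal.ofReal C * μ (axisCube c r))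
    (c : Euc n) {w : ℝ} (hw : 0 < w) (i : Fin n) (p : ℤ) {t : ℤ} (ht : |t| ≤ 2) (q : ℕ) :
    μ (slab c w i p ((q:ℝ) * w)) ≤ ENNReal.ofReal C ^ 4 * μ (sbox c w i (p + t) q) := by
  classical
  set G : Finset (Fin n → ℤ) :=
    Fintype.piFinset (fun j => if j = i then ({p, p+1} : Finset ℤ) else Finset.Icc (-(q:ℤ)) q)
    with hG
  -- step 1: slab covered by cells indexed by G
  have hcov : slab c w i p ((q:ℝ) * w) ⊆ ⋃ g ∈ G, cell c w g := by
    intro x hx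
    have hmem : (fun j => ⌊(x j - c j)/w⌋) ∈ G := by
      rw [hG, Fintype.mem_piFinset]
      intro j
      by_cases hj : j = i
      · subst hj
        rw [if_pos rfl]
        have h1 := hx.1.1
        have h2 := hx.1.2
        have hlo : (p:ℤ) ≤ ⌊(x j - c j)/w⌋ := by
          rw [Int.le_floor]
          push_cast
          rw [le_div_iff₀ hw]
          linarith
        have hhi : ⌊(x j - c j)/w⌋ ≤ p + 1 := by
          have : (x j - c j)/w ≤ ((p+1 : ℤ) : ℝ) := by
            rw [div_le_iff₀ hw]; push_cast; linarith
          calc ⌊(x j - c j)/w⌋ ≤ ⌊((p+1 : ℤ) : ℝ)⌋ := Int.floor_le_floor this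
          _ = p + 1 := Int.floor_intCast _
        simp only [Finset.mem_insert, Finset.mem_singleton]
        omega
      · rw [if_neg hj]
        have h := abs_le.mp (hx.2 j)
        rw [Finset.mem_Icc]
        constructor
        · rw [Int.le_floor]
          push_cast
          rw [le_div_iff₀ hw]
          nlinarith [h.1]
        · have h1 : (x j - c j)/w ≤ ((q:ℤ):ℝ) := by
            rw [div_le_iff₀ hw]; push_cast; nlinarith [h.2]
          calc ⌊(x j - c j)/w⌋ ≤ ⌊((q:ℤ):ℝ)⌋ := Int.floor_le_floor h1
          _ = q := Int.floor_intCast _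
    exact Set.mem_biUnion hmem (mem_cell_floor c hw x)
  -- step 2+3
  have h2 : μ (slab c w i p ((q:ℝ) * w)) ≤ ∑ g ∈ G, μ (cell c w g) :=
    (measure_mono hcov).trans (measure_biUnion_finset_le G _)
  have h3 : ∑ g ∈ G, μ (cell c w g) ≤
      ENNReal.ofReal C ^ 4 * ∑ g ∈ G, μ (cell c w (shf i t g)) := by
    rw [Finset.mul_sum]
    exact Finset.sum_le_sum fun g _ => cell_shift hd c hw i ht g
  -- step 4: shifted cells are disjoint and inside sbox
  have h4 : ∑ g ∈ G, μ (cell c w (shf i t g)) ≤ μ (sbox c w i (p + t) q) := by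
    have hdisj : (G : Set (Fin n → ℤ)).PairwiseDisjoint (fun g => cell c w (shf i t g)) := by
      intro g₁ _ g₂ _ hne
      exact cell_disjoint c hw (fun h => hne (shf_inj i t h))
    rw [← measure_biUnion_finset hdisj (fun g _ => measurableSet_cell c w _)]
    refine measure_mono ?_
    intro x hx
    obtain ⟨g, hgG, hxg⟩ := Set.mem_iUnion₂.mp hx
    rw [hG, Fintype.mem_piFinset] at hgG
    have hgi := hgG i
    rw [if_pos rfl] at hgi
    simp only [Finset.mem_insert, Finset.mem_singleton] at hgi
    have hgr : ((g i : ℝ)) = (p:ℝ) ∨ ((g i : ℝ)) = (p:ℝ) + 1 := by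
      rcases hgi with h | h
      · left; exact_mod_cast congrArg (Int.cast : ℤ → ℝ) h
      · right; push_cast [h]; ring
    have hbi1 := (hxg i).1
    have hbi2 := (hxg i).2
    have hsi : ((shf i t g i : ℤ) : ℝ) = (g i : ℝ) + (t:ℝ) := by simp [shf]
    rw [hsi] at hbi1 hbi2
    constructor
    · push_cast
      rcases hgr with h | h <;> rw [h] at hbi1 hbi2 <;>
        exact ⟨by linarith, by linarith⟩
    · intro j hj
      have hgj := hgG j
      rw [if_neg hj, Finset.mem_Icc] at hgj
      have hq1 : (-(q:ℝ)) ≤ (g j : ℝ) := by exact_mod_cast hgj.1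
      have hq2 : ((g j : ℝ)) ≤ (q:ℝ) := by exact_mod_cast hgj.2
      have hb1 := (hxg j).1
      have hb2 := (hxg j).2
      have hsj : ((shf i t g j : ℤ) : ℝ) = (g j : ℝ) := by simp [shf, hj]
      rw [hsj] at hb1 hb2
      have hm1 : (-(q:ℝ)) * w ≤ (g j : ℝ) * w := mul_le_mul_of_nonneg_right hq1 hw.le
      have hm2 : ((g j : ℝ)) * w ≤ (q:ℝ) * w := mul_le_mul_of_nonneg_right hq2 hw.le
      exact ⟨by linarith, by linarith⟩
  calc μ (slab c w i p ((q:ℝ)*w)) ≤ ∑ g ∈ G, μ (cell c w g) := h2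
  _ ≤ ENNReal.ofReal C ^ 4 * ∑ g ∈ G, μ (cell c w (shf i t g)) := h3
  _ ≤ ENNReal.ofReal C ^ 4 * μ (sbox c w i (p+t) q) := mul_le_mul_right h4 _

lemma annulus_step
    (hd : ∀ (c : Euc n) (r : ℝ), 0 < r → μ (axisCube c (2*r)) ≤ ENNReal.ofReal C * μ (axisCube c r))
    (c : Euc n) {r : ℝ} (hr : 0 < r) (m : ℕ) (hm : 1 ≤ m) :
    μ (axisCube c (r + r/m) \ axisCube c r) ≤
      (n : ℝ≥0∞) * 2 * ENNReal.ofReal C ^ 4 *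
        μ (axisCube c (r + 4*(r/m)) \ axisCube c (r + r/m)) := by
  classical
  set w : ℝ := r / m with hwdef
  have hm0 : (m:ℝ) ≠ 0 := by positivity
  have hw : 0 < w := by positivity
  have hmw : (m:ℝ) * w = r := by rw [hwdef]; field_simp
  set K : ℝ≥0∞ := ENNReal.ofReal C ^ 4 with hK
  set W : Set (Euc n) := axisCube c (r + 4*w) \ axisCube c (r + w) with hW
  have hL : ((m+1:ℕ):ℝ) * w = r + w := by push_cast; nlinarith [hmw]
  -- cover of the annulus by slabs
  have hcov : axisCube c (r + w) \ axisCube c r ⊆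
      ⋃ i ∈ (Finset.univ : Finset (Fin n)),
        (slab c w i (m:ℤ) (((m+1:ℕ):ℝ) * w) ∪ slab c w i (-((m:ℤ)+1)) (((m+1:ℕ):ℝ) * w)) := by
    rintro x ⟨hx1, hx2⟩
    have hx2' : ∃ i, r < |x i - c i| := by
      by_contra h
      push_neg at h
      exact hx2 (fun i => h i)
    obtain ⟨i, hi⟩ := hx2'
    have hxi := hx1 i
    refine Set.mem_biUnion (Finset.mem_univ i) ?_
    rcases le_or_gt 0 (x i - c i) with hs | hs
    · left
      refine ⟨⟨?_, ?_⟩, fun j => by rw [hL]; exact hx1 j⟩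
      · rw [abs_of_nonneg hs] at hi; push_cast; linarith [hmw]
      · have := (abs_le.mp hxi).2; push_cast; nlinarith [hmw]
    · right
      have h1 := (abs_le.mp hxi).1
      have h2 : x i - c i < -r := by rw [abs_of_neg hs] at hi; linarith
      refine ⟨⟨?_, ?_⟩, fun j => by rw [hL]; exact hx1 j⟩
      · push_cast; nlinarith [hmw]
      · push_cast; nlinarith [hmw]
  -- each sbox lands in W
  have hbox1 : ∀ i : Fin n, sbox c w i ((m:ℤ) + 2) (m+1) ⊆ W := by
    rintro i x ⟨⟨h1, h2⟩, hlat⟩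
    push_cast at h1 h2
    constructor
    · intro j
      by_cases hj : j = i
      · subst hj; rw [abs_le]; constructor <;> nlinarith [hmw]
      · have := hlat j hj; push_cast at this
        rw [abs_le]; constructor <;> nlinarith [this.1, this.2, hmw]
    · intro hmem
      have := (abs_le.mp (hmem i)).2
      nlinarith [hmw]
  have hbox2 : ∀ i : Fin n, sbox c w i (-((m:ℤ)+1) + -2) (m+1) ⊆ W := by
    rintro i x ⟨⟨h1, h2⟩, hlat⟩
    push_cast at h1 h2
    constructor
    · intro j
      by_cases hj : j = i
      · subst hj; rw [abs_le]; constructor <;> nlinarith [hmw]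
      · have := hlat j hj; push_cast at this
        rw [abs_le]; constructor <;> nlinarith [this.1, this.2, hmw]
    · intro hmem
      have := (abs_le.mp (hmem i)).1
      nlinarith [hmw]
  have ht2 : |(2:ℤ)| ≤ 2 := by decide
  have htm2 : |(-2:ℤ)| ≤ 2 := by decide
  calc μ (axisCube c (r + w) \ axisCube c r)
      ≤ ∑ i : Fin n, μ (slab c w i (m:ℤ) (((m+1:ℕ):ℝ) * w) ∪
          slab c w i (-((m:ℤ)+1)) (((m+1:ℕ):ℝ) * w)) :=
        (measure_mono hcov).trans (measure_biUnion_finset_le _ _)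
    _ ≤ ∑ _i : Fin n, (K * μ W + K * μ W) := by
        refine Finset.sum_le_sum fun i _ => ?_
        refine (measure_union_le _ _).trans (add_le_add ?_ ?_)
        · exact (slab_le hd c hw i (m:ℤ) ht2 (m+1)).trans
            (mul_le_mul_right (measure_mono (hbox1 i)) _)
        · exact (slab_le hd c hw i (-((m:ℤ)+1)) htm2 (m+1)).trans
            (mul_le_mul_right (measure_mono (hbox2 i)) _)
    _ = (n : ℝ≥0∞) * 2 * K * μ W := by
        rw [Finset.sum_const, Finset.card_univ, Fintype.card_fin, nsmul_eq_mul]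
        ring
lemma annulus_decay (hC : 0 < C)
    (hd : ∀ (c : Euc n) (r : ℝ), 0 < r → μ (axisCube c (2*r)) ≤ ENNReal.ofReal C * μ (axisCube c r))
    (K : ℕ) (c : Euc n) {r : ℝ} (hr : 0 < r) :
    μ (axisCube c (r + r/4^K) \ axisCube c r) ≤
      ENNReal.ofReal ((((n:ℝ)*2*C^4)/(1+(n:ℝ)*2*C^4))^K * C) * μ (axisCube c r) := by
  set a : ℝ := (n:ℝ)*2*C^4 with ha
  have ha0 : 0 ≤ a := by positivity
  induction K with
  | zero =>
    have h40 : r + r/4^(0:ℕ) = 2*r := by norm_num; ring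
    rw [h40]
    calc μ (axisCube c (2*r) \ axisCube c r) ≤ μ (axisCube c (2*r)) :=
          measure_mono Set.diff_subset
    _ ≤ ENNReal.ofReal C * μ (axisCube c r) := hd c r hr
    _ = ENNReal.ofReal ((a/(1+a))^(0:ℕ) * C) * μ (axisCube c r) := by norm_num
  | succ K ih =>
    have hN : (n : ℝ≥0∞) * 2 * ENNReal.ofReal C ^ 4 = ENNReal.ofReal a := by
      rw [ha, ← ENNReal.ofReal_pow hC.le, ← ENNReal.ofReal_natCast n,
        ← ENNReal.ofReal_ofNat 2, ← ENNReal.ofReal_mul (by positivity),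
        ← ENNReal.ofReal_mul (by positivity)]
    have hstep := annulus_step hd c hr (4^(K+1)) (Nat.one_le_pow _ _ (by norm_num))
    rw [hN] at hstep
    have hcast : ((4^(K+1) : ℕ) : ℝ) = 4^(K+1) := by push_cast; ring
    rw [hcast] at hstep
    have harith : 4*(r/4^(K+1)) = r/4^K := by
      field_simp
      ring
    rw [harith] at hstep
    -- combine annuli
    have hsub1 : axisCube c r ⊆ axisCube c (r + r/4^(K+1)) :=
      axisCube_mono c (le_add_of_nonneg_right (by positivity))
    have hsub2 : axisCube c (r + r/4^(K+1)) ⊆ axisCube c (r + r/4^K) := by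
      refine axisCube_mono c (add_le_add_right ?_ r)
      apply div_le_div_of_nonneg_left hr.le (by positivity)
      exact pow_le_pow_right₀ (by norm_num) (Nat.le_succ K)
    have hdisj : Disjoint (axisCube c (r + r/4^K) \ axisCube c (r + r/4^(K+1)))
        (axisCube c (r + r/4^(K+1)) \ axisCube c r) := by
      rw [Set.disjoint_left]
      rintro x ⟨_, hx2⟩ ⟨hx3, _⟩
      exact hx2 hx3
    have hunion : (axisCube c (r + r/4^K) \ axisCube c (r + r/4^(K+1))) ∪
        (axisCube c (r + r/4^(K+1)) \ axisCube c r) = axisCube c (r + r/4^K) \ axisCube c r :=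
      Set.diff_union_diff_cancel hsub2 hsub1
    have hmeas : MeasurableSet (axisCube c (r + r/4^(K+1)) \ axisCube c r) :=
      (measurableSet_axisCube c _).diff (measurableSet_axisCube c _)
    set X := μ (axisCube c (r + r/4^(K+1)) \ axisCube c r) with hX
    set Y := μ (axisCube c (r + r/4^K) \ axisCube c r) with hY
    have hXY : μ (axisCube c (r + r/4^K) \ axisCube c (r + r/4^(K+1))) + X ≤ Y := by
      rw [← measure_union hdisj hmeas, hunion]
    have hkey : (1 + ENNReal.ofReal a) * X ≤ ENNReal.ofReal a * Y := by
      calc (1 + ENNReal.ofReal a) * X = X + ENNReal.ofReal a * X := by ring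
      _ ≤ ENNReal.ofReal a * μ (axisCube c (r + r/4^K) \ axisCube c (r + r/4^(K+1)))
            + ENNReal.ofReal a * X := add_le_add_left hstep _
      _ = ENNReal.ofReal a * (μ (axisCube c (r + r/4^K) \ axisCube c (r + r/4^(K+1))) + X) := by
            ring
      _ ≤ ENNReal.ofReal a * Y := mul_le_mul_right hXY _
    have hne : (1 : ℝ≥0∞) + ENNReal.ofReal a ≠ 0 := by simp
    have hfin : (1 : ℝ≥0∞) + ENNReal.ofReal a ≠ ⊤ := by
      simp [ENNReal.add_ne_top]
    have hXle : X ≤ ENNReal.ofReal (a/(1+a)) * Y := by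
      have h := mul_le_mul_right hkey (1 + ENNReal.ofReal a)⁻¹
      rw [← mul_assoc, ENNReal.inv_mul_cancel hne hfin, one_mul, ← mul_assoc] at h
      have hρ : (1 + ENNReal.ofReal a)⁻¹ * ENNReal.ofReal a = ENNReal.ofReal (a/(1+a)) := by
        rw [ENNReal.ofReal_div_of_pos (by positivity), ENNReal.div_eq_inv_mul,
          ENNReal.ofReal_add zero_le_one ha0, ENNReal.ofReal_one]
      rwa [hρ] at h
    calc X ≤ ENNReal.ofReal (a/(1+a)) * Y := hXle
    _ ≤ ENNReal.ofReal (a/(1+a)) * (ENNReal.ofReal ((a/(1+a))^K * C) * μ (axisCube c r)) :=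
          mul_le_mul_right ih _
    _ = ENNReal.ofReal ((a/(1+a))^(K+1) * C) * μ (axisCube c r) := by
          rw [← mul_assoc, ← ENNReal.ofReal_mul (by positivity)]
          ring_nf

end Aux7

open Aux7 in
theorem stmt7 (n : ℕ) (hn : 1 ≤ n) (μ₁ μ₂ : Measure (Euc n))
    (hμ₁ : ∀ Q : Set (Euc n), IsCube Q → 0 < μ₁ Q ∧ μ₁ Q < ⊤)
    (hμ₂ : ∀ Q : Set (Euc n), IsCube Q → 0 < μ₂ Q ∧ μ₂ Q < ⊤)
    (δ : ℝ) (hδ : 0 < δ) (hcomp : Compar μ₁ μ₂ δ)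
    (hdoub : Doubling μ₁ ∨ Doubling μ₂) :
    Doubling μ₁ ∧ Doubling μ₂ := by
  obtain ⟨Cc, hCc, hcmp⟩ := hcomp
  have cubeIs : ∀ (c : Euc n) {r : ℝ}, 0 < r → IsCube (axisCube c r) :=
    fun c r hr => ⟨c, _, hr, rfl⟩
  rcases hdoub with h1 | h2
  · -- μ₁ doubling ⇒ μ₂ doubling
    refine ⟨h1, ?_⟩
    obtain ⟨C₁, hC₁, hd1⟩ := h1
    refine ⟨(Cc*C₁)^(1/δ), by positivity, fun c r hr => ?_⟩
    have hr2 : (0:ℝ) < 2*r := by linarith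
    have hQ := hμ₁ _ (cubeIs c hr)
    have hc := hcmp (axisCube c (2*r)) (cubeIs c hr2) (axisCube c r)
      (axisCube_mono c (by linarith)) (measurableSet_axisCube c r)
    have key : μ₂ (axisCube c (2*r)) ^ δ ≤
        (ENNReal.ofReal Cc * ENNReal.ofReal C₁) * μ₂ (axisCube c r) ^ δ := by
      rw [← ENNReal.mul_le_mul_iff_right hQ.1.ne' hQ.2.ne]
      calc μ₁ (axisCube c r) * μ₂ (axisCube c (2*r)) ^ δ
          ≤ ENNReal.ofReal Cc * (μ₁ (axisCube c (2*r)) * μ₂ (axisCube c r) ^ δ) := hc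
        _ ≤ ENNReal.ofReal Cc * ((ENNReal.ofReal C₁ * μ₁ (axisCube c r)) * μ₂ (axisCube c r) ^ δ) := by
            exact mul_le_mul_right (mul_le_mul_left (hd1 c r hr) _) _
        _ = μ₁ (axisCube c r) * ((ENNReal.ofReal Cc * ENNReal.ofReal C₁) * μ₂ (axisCube c r) ^ δ) := by
            ring
    have key2 := ENNReal.rpow_le_rpow key (by positivity : (0:ℝ) ≤ 1/δ)
    rw [ENNReal.mul_rpow_of_nonneg _ _ (by positivity), ← ENNReal.rpow_mul,
      ← ENNReal.rpow_mul, mul_one_div_cancel hδ.ne', ENNReal.rpow_one, ENNReal.rpow_one,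
      ← ENNReal.ofReal_mul hCc.le, ENNReal.ofReal_rpow_of_pos (by positivity)] at key2
    exact key2
  · -- μ₂ doubling ⇒ μ₁ doubling
    obtain ⟨C₂, hC₂, hd2⟩ := h2
    have hd2' : ∀ (c : Euc n) (r : ℝ), 0 < r →
        μ₂ (axisCube c (2*r)) ≤ ENNReal.ofReal C₂ * μ₂ (axisCube c r) := hd2
    refine ⟨?_, ⟨C₂, hC₂, hd2⟩⟩
    set a : ℝ := (n:ℝ)*2*C₂^4 with ha
    have hn' : (1:ℝ) ≤ (n:ℝ) := by exact_mod_cast hn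
    have ha0 : 0 < a := by positivity
    set ρ : ℝ := a/(1+a) with hρdef
    have hρ0 : 0 < ρ := by positivity
    have hρ1 : ρ < 1 := by
      rw [hρdef, div_lt_one (by positivity)]; linarith
    set q : ℝ := (2*Cc)⁻¹ with hq
    have hq0 : 0 < q := by positivity
    obtain ⟨K, hK⟩ := exists_pow_lt_of_lt_one (x := q^(1/δ)/C₂) (by positivity) hρ1
    set β : ℝ := ρ^K * C₂ with hβ
    have hβ0 : 0 < β := by positivity
    have hβlt : β < q^(1/δ) := by
      rw [hβ]
      calc ρ^K * C₂ < (q^(1/δ)/C₂) * C₂ := by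
            exact mul_lt_mul_of_pos_right hK hC₂
      _ = q^(1/δ) := by field_simp
    have hsmall : 2 * (Cc * β^δ) ≤ 1 := by
      have h1 : β^δ ≤ (q^(1/δ))^δ :=
        Real.rpow_le_rpow hβ0.le hβlt.le hδ.le
      have h2 : (q^(1/δ))^δ = q := by
        rw [← Real.rpow_mul hq0.le, one_div_mul_cancel hδ.ne', Real.rpow_one]
      rw [h2] at h1
      rw [hq] at h1
      have hb : 0 < β^δ := Real.rpow_pos_of_pos hβ0 δ
      calc 2 * (Cc * β^δ) ≤ 2 * (Cc * (2*Cc)⁻¹) := by nlinarith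
      _ = 1 := by field_simp
    -- one-step expansion estimate for μ₁
    have step1 : ∀ (c : Euc n) (r : ℝ), 0 < r →
        μ₁ (axisCube c (r + r/4^K)) ≤ 2 * μ₁ (axisCube c r) := by
      intro c r hr
      have hr' : 0 < r + r/4^K := by positivity
      set Q' := axisCube c (r + r/4^K) with hQ'def
      set E := Q' \ axisCube c r with hEdef
      have hQ'c := hμ₁ Q' (cubeIs c hr')
      have hQ2 := hμ₂ Q' (cubeIs c hr')
      have hmeasE : MeasurableSet E :=
        (measurableSet_axisCube c _).diff (measurableSet_axisCube c _)
      have hsubQ : axisCube c r ⊆ Q' :=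
        axisCube_mono c (le_add_of_nonneg_right (by positivity))
      have hc := hcmp Q' (cubeIs c hr') E Set.diff_subset hmeasE
      have hE2 : μ₂ E ≤ ENNReal.ofReal β * μ₂ Q' :=
        (annulus_decay hC₂ hd2' K c hr).trans
          (mul_le_mul_right (measure_mono hsubQ) _)
      have hE2δ : μ₂ E ^ δ ≤ ENNReal.ofReal (β^δ) * μ₂ Q' ^ δ := by
        calc μ₂ E ^ δ ≤ (ENNReal.ofReal β * μ₂ Q') ^ δ := ENNReal.rpow_le_rpow hE2 hδ.le
        _ = ENNReal.ofReal β ^ δ * μ₂ Q' ^ δ := ENNReal.mul_rpow_of_nonneg _ _ hδ.le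
        _ = ENNReal.ofReal (β^δ) * μ₂ Q' ^ δ := by rw [ENNReal.ofReal_rpow_of_pos hβ0]
      have hX0 : μ₂ Q' ^ δ ≠ 0 := (ENNReal.rpow_pos hQ2.1 hQ2.2.ne).ne'
      have hXt : μ₂ Q' ^ δ ≠ ⊤ := ENNReal.rpow_ne_top_of_nonneg hδ.le hQ2.2.ne
      have hE1 : μ₁ E ≤ ENNReal.ofReal (Cc * β^δ) * μ₁ Q' := by
        rw [← ENNReal.mul_le_mul_iff_left hX0 hXt]
        calc μ₁ E * μ₂ Q' ^ δ ≤ ENNReal.ofReal Cc * (μ₁ Q' * μ₂ E ^ δ) := hc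
        _ ≤ ENNReal.ofReal Cc * (μ₁ Q' * (ENNReal.ofReal (β^δ) * μ₂ Q' ^ δ)) :=
            mul_le_mul_right (mul_le_mul_right hE2δ _) _
        _ = (ENNReal.ofReal Cc * ENNReal.ofReal (β^δ)) * μ₁ Q' * μ₂ Q' ^ δ := by ring
        _ = ENNReal.ofReal (Cc * β^δ) * μ₁ Q' * μ₂ Q' ^ δ := by
            rw [← ENNReal.ofReal_mul hCc.le]
      have hsplit : μ₁ Q' ≤ μ₁ (axisCube c r) + μ₁ E := by
        have hu : Q' = axisCube c r ∪ E := (Set.union_diff_cancel hsubQ).symm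
        calc μ₁ Q' = μ₁ (axisCube c r ∪ E) := by rw [← hu]
        _ ≤ μ₁ (axisCube c r) + μ₁ E := measure_union_le _ _
      have h2E : 2 * μ₁ E ≤ μ₁ Q' := by
        calc 2 * μ₁ E ≤ 2 * (ENNReal.ofReal (Cc * β^δ) * μ₁ Q') := mul_le_mul_right hE1 _
        _ = (2 * ENNReal.ofReal (Cc * β^δ)) * μ₁ Q' := by ring
        _ = ENNReal.ofReal (2 * (Cc * β^δ)) * μ₁ Q' := by
            rw [ENNReal.ofReal_mul (by norm_num : (0:ℝ) ≤ 2), ENNReal.ofReal_ofNat]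
        _ ≤ 1 * μ₁ Q' := mul_le_mul_left (ENNReal.ofReal_le_one.mpr hsmall) _
        _ = μ₁ Q' := one_mul _
      have hfin : μ₁ Q' ≠ ⊤ := hQ'c.2.ne
      have hfinal : μ₁ Q' + μ₁ Q' ≤ 2 * μ₁ (axisCube c r) + μ₁ Q' := by
        calc μ₁ Q' + μ₁ Q' = 2 * μ₁ Q' := (two_mul _).symm
        _ ≤ 2 * (μ₁ (axisCube c r) + μ₁ E) := mul_le_mul_right hsplit _
        _ = 2 * μ₁ (axisCube c r) + 2 * μ₁ E := by ring
        _ ≤ 2 * μ₁ (axisCube c r) + μ₁ Q' := add_le_add_right h2E _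
      exact (ENNReal.add_le_add_iff_right hfin).mp hfinal
    -- iterate
    set τ : ℝ := 1 + 1/4^K with hτdef
    have h4K : (0:ℝ) < 1/4^K := by positivity
    have hτ1 : 1 < τ := by rw [hτdef]; linarith
    have hτ0 : 0 < τ := lt_trans one_pos hτ1
    have iter : ∀ (j : ℕ) (c : Euc n) (r : ℝ), 0 < r →
        μ₁ (axisCube c (τ^j * r)) ≤ 2^j * μ₁ (axisCube c r) := by
      intro j
      induction j with
      | zero => intro c r hr; simp
      | succ j ih =>
        intro c r hr
        have hrj : 0 < τ^j * r := mul_pos (pow_pos hτ0 j) hr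
        have harr : τ^(j+1) * r = (τ^j*r) + (τ^j*r)/4^K := by
          rw [pow_succ, hτdef]
          field_simp
        rw [harr]
        calc μ₁ (axisCube c ((τ^j*r) + (τ^j*r)/4^K)) ≤ 2 * μ₁ (axisCube c (τ^j*r)) :=
              step1 c _ hrj
        _ ≤ 2 * (2^j * μ₁ (axisCube c r)) := mul_le_mul_right (ih c r hr) _
        _ = 2^(j+1) * μ₁ (axisCube c r) := by ring
    obtain ⟨M, hM⟩ := pow_unbounded_of_one_lt (2:ℝ) hτ1
    refine ⟨2^M, by positivity, fun c r hr => ?_⟩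
    have hmono : μ₁ (axisCube c (2*r)) ≤ μ₁ (axisCube c (τ^M * r)) :=
      measure_mono (axisCube_mono c (mul_le_mul_of_nonneg_right hM.le hr.le))
    refine hmono.trans ((iter M c r hr).trans ?_)
    rw [ENNReal.ofReal_pow (by norm_num : (0:ℝ) ≤ 2), ENNReal.ofReal_ofNat]
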